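/- For all x in (0, π/2], it holds that 2/π + (1/(2π⁵))(π⁴ − 16x⁴) ≤ sin(x)/x ≤ 2/π + ((π − 2)/π⁵)(π⁴ − 16x⁴). -/

import Mathlib

set_option maxHeartbeats 1600000

open Real

theorem jiang_yun_quartic (x : ℝ) (hx : x ∈ Set.Ioc 0 (π/2)) :
    2/π + 1/(2*π^5) * (π^4 - 16*x^4) ≤ Real.sin x / x ∧
    Real.sin x / x ≤ 2/π + (π - 2)/π^5 * (π^4 - 16*x^4) := by
  obtain ⟨hx0, hx2⟩ := hx
  have hπ : 0 < π := pi_pos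
  have hπl : 3.141592 < π := pi_gt_d6
  have hπu : π < 3.141593 := pi_lt_d6
  have hp2l : (9.8696:ℝ) < π^2 := by nlinarith
  have hp2u : π^2 < 9.8696066 := by nlinarith
  have hp3l : (31.0062:ℝ) < π^3 := by nlinarith [hp2l, hπl, hπ]
  have hp3u : π^3 < 31.00630 := by nlinarith [hp2u, hπu, hπ]
  have hp4l : (97.40900:ℝ) < π^4 := by nlinarith [hp2l, hp2u]
  have hp4u : π^4 < 97.40914 := by nlinarith [hp2l, hp2u]
  have hp5l : (306.019:ℝ) < π^5 := by nlinarith [hp4l, hπl, hπ, hp4u]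
  have hp5u : π^5 < 306.0200 := by nlinarith [hp4l, hp4u, hπu, hπ]
  have hπ5 : (0:ℝ) < π^5 := by positivity
  constructor
  · rw [le_div_iff₀ hx0]
    have e : (2/π + 1/(2*π^5) * (π^4 - 16*x^4)) * x
        = (2*π^4*x + (π^4 - 16*x^4)*x/2) / π^5 := by
      field_simp
    rw [e, div_le_iff₀ hπ5]
    -- goal : 2*π^4*x + (π^4 - 16*x^4)*x/2 ≤ sin x * π^5
    rcases le_total x 1 with h1 | h1
    · have hb := Real.sin_bound (x := x) (by rw [abs_of_pos hx0]; exact h1)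
      rw [abs_of_pos hx0] at hb
      have hlo : x - x^3/6 - x^4 * (5/96) ≤ Real.sin x := by
        have := (abs_le.mp hb).1; linarith [pow_le_pow_of_le_one hx0.le h1 (show 4 ≤ 5 by norm_num), pow_nonneg hx0.le 4]
      have hlo' : π^5 * (x - x^3/6 - x^4 * (5/96)) ≤ π^5 * Real.sin x :=
        mul_le_mul_of_nonneg_left hlo hπ5.le
      -- polynomial part
      have haux : (0:ℝ) ≤ 8*x^4 - 15.94*x^3 - 51.01*x^2 + 62.49 := by
        nlinarith [mul_nonneg (sub_nonneg.2 h1)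
          (show (0:ℝ) ≤ 58.95 + 58.95*x + 7.94*x^2 - 8*x^3 by nlinarith [hx0.le, h1, sq_nonneg x])]
      have hpoly : (0:ℝ) ≤ 62.49*x - 51.01*x^3 - 15.94*x^4 + 8*x^5 := by
        nlinarith [mul_le_mul_of_nonneg_left haux hx0.le]
      have c1 : (62.49:ℝ)*x ≤ (π^5 - 2.5*π^4)*x := by
        have : (62.49:ℝ) ≤ π^5 - 2.5*π^4 := by linarith
        nlinarith [mul_le_mul_of_nonneg_right this hx0.le]
      have c2 : π^5/6*x^3 ≤ 51.01*x^3 := by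
        have h3 : (0:ℝ) ≤ x^3 := by positivity
        nlinarith [mul_le_mul_of_nonneg_right (show π^5/6 ≤ (51.01:ℝ) by linarith) h3]
      have c3 : π^5*(5/96)*x^4 ≤ 15.94*x^4 := by
        have h4 : (0:ℝ) ≤ x^4 := by positivity
        nlinarith [mul_le_mul_of_nonneg_right (show π^5*(5/96) ≤ (15.94:ℝ) by linarith) h4]
      have h8 : (8:ℝ)*x^5 ≤ 8*x^5 := le_refl _
      linarith [hlo', hpoly, c1, c2, c3]
    · -- x ∈ [1, π/2] : use cos bound at s = π/2 - x
      have hs0 : (0:ℝ) ≤ π/2 - x := by linarith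
      have hsu : π/2 - x ≤ 0.5708 := by linarith
      have hcs : Real.sin x = Real.cos (π/2 - x) := (Real.cos_pi_div_two_sub x).symm
      have hcos : 1 - (π/2 - x)^2/2 ≤ Real.cos (π/2 - x) := Real.one_sub_sq_div_two_le_cos
      have hcos' : π^5 * (1 - (π/2 - x)^2/2) ≤ π^5 * Real.cos (π/2 - x) :=
        mul_le_mul_of_nonneg_left hcos hπ5.le
      have hH : (0:ℝ) ≤ 10*π^3 - π^5/2 - 20*π^2*(π/2 - x) + 20*π*(π/2 - x)^2 - 8*(π/2 - x)^3 := by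
        nlinarith [mul_nonneg (sq_nonneg (π/2 - x)) (show (0:ℝ) ≤ 20*π - 8*(π/2 - x) by linarith),
          mul_le_mul_of_nonneg_right hp2u.le hs0, hs0, hsu,
          mul_le_mul_of_nonneg_left hsu (show (0:ℝ) ≤ 20*π^2 by positivity)]
      have hID : (0:ℝ) ≤ (π/2 - x)^2 *
          (10*π^3 - π^5/2 - 20*π^2*(π/2 - x) + 20*π*(π/2 - x)^2 - 8*(π/2 - x)^3) :=
        mul_nonneg (sq_nonneg _) hH
      rw [hcs]
      nlinarith [hcos', hID]
  · rw [div_le_iff₀ hx0]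
    have e : (2/π + (π - 2)/π^5 * (π^4 - 16*x^4)) * x
        = (2*π^4*x + (π - 2)*(π^4 - 16*x^4)*x) / π^5 := by
      field_simp
    rw [e, le_div_iff₀ hπ5]
    -- goal : sin x * π^5 ≤ 2*π^4*x + (π-2)*(π^4-16*x^4)*x  (= π^5 x - 16(π-2) x^5)
    rcases le_total x 1 with h1 | h1
    · have hb := Real.sin_bound (x := x) (by rw [abs_of_pos hx0]; exact h1)
      rw [abs_of_pos hx0] at hb
      have hhi : Real.sin x ≤ x - x^3/6 + x^4 * (5/96) := by
        have := (abs_le.mp hb).2; linarith [pow_le_pow_of_le_one hx0.le h1 (show 4 ≤ 5 by norm_num), pow_nonneg hx0.le 4]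
      have hhi' : π^5 * Real.sin x ≤ π^5 * (x - x^3/6 + x^4 * (5/96)) :=
        mul_le_mul_of_nonneg_left hhi hπ5.le
      have h34 : x^4 ≤ x^3 := pow_le_pow_of_le_one hx0.le h1 (by norm_num)
      have h35 : x^5 ≤ x^3 := pow_le_pow_of_le_one hx0.le h1 (by norm_num)
      have hc : (0:ℝ) ≤ π^5/6 - π^5*(5/96) - 16*(π-2) := by linarith
      have hc3 : (0:ℝ) ≤ x^3 * (π^5/6 - π^5*(5/96) - 16*(π-2)) :=
        mul_nonneg (by positivity) hc
      have ht1 : (0:ℝ) ≤ (x^3 - x^4) * (π^5*(5/96)) :=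
        mul_nonneg (by linarith) (by positivity)
      have ht2 : (0:ℝ) ≤ (x^3 - x^5) * (16*(π-2)) :=
        mul_nonneg (by linarith) (by nlinarith)
      linarith [hhi', hc3, ht1, ht2]
    · have hs0 : (0:ℝ) ≤ π/2 - x := by linarith
      have hsu : π/2 - x ≤ 0.5708 := by linarith
      have hs1 : |π/2 - x| ≤ 1 := by rw [abs_of_nonneg hs0]; linarith
      have hcs : Real.sin x = Real.cos (π/2 - x) := (Real.cos_pi_div_two_sub x).symm
      have hb := Real.cos_bound hs1
      rw [abs_of_nonneg hs0] at hb
      have hcos : Real.cos (π/2 - x) ≤ 1 - (π/2 - x)^2/2 + (π/2 - x)^4 * (5/96) := by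
        have := (abs_le.mp hb).2; linarith
      have hcos' : π^5 * Real.cos (π/2 - x) ≤
          π^5 * (1 - (π/2 - x)^2/2 + (π/2 - x)^4 * (5/96)) :=
        mul_le_mul_of_nonneg_left hcos hπ5.le
      -- Q(s) ≥ 0 for s = π/2 - x
      have hA : (249.9:ℝ) ≤ 4*π^5 - 10*π^4 := by linarith
      have hB : (-554.93:ℝ) ≤ π^5/2 - 20*π^4 + 40*π^3 := by linarith
      have hC : (450.6:ℝ) ≤ 40*π^3 - 80*π^2 := by linarith
      have hD : (-159.4:ℝ) ≤ -5*π^5/96 - 40*π^2 + 80*π := by linarith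
      have hE : (0:ℝ) ≤ 16*π - 32 := by linarith
      have hnum : (0:ℝ) ≤ 249.9 - 554.93*(π/2 - x) + 450.6*(π/2 - x)^2 - 159.4*(π/2 - x)^3 := by
        nlinarith [sq_nonneg (π/2 - x - 0.77), mul_nonneg (sq_nonneg (π/2 - x)) (show (0:ℝ) ≤ 0.5708 - (π/2 - x) by linarith), hs0, hsu]
      have hQ : (0:ℝ) ≤ (4*π^5 - 10*π^4) + (π^5/2 - 20*π^4 + 40*π^3)*(π/2 - x)
          + (40*π^3 - 80*π^2)*(π/2 - x)^2 + (-5*π^5/96 - 40*π^2 + 80*π)*(π/2 - x)^3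
          + (16*π - 32)*(π/2 - x)^4 := by
        nlinarith [hnum, hs0, hsu,
          mul_le_mul_of_nonneg_right hB hs0,
          mul_le_mul_of_nonneg_right hC (sq_nonneg (π/2 - x)),
          mul_le_mul_of_nonneg_right hD (show (0:ℝ) ≤ (π/2 - x)^3 by positivity),
          mul_nonneg hE (show (0:ℝ) ≤ (π/2 - x)^4 by positivity)]
      have hID : (0:ℝ) ≤ (π/2 - x) * ((4*π^5 - 10*π^4) + (π^5/2 - 20*π^4 + 40*π^3)*(π/2 - x)
          + (40*π^3 - 80*π^2)*(π/2 - x)^2 + (-5*π^5/96 - 40*π^2 + 80*π)*(π/2 - x)^3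
          + (16*π - 32)*(π/2 - x)^4) := mul_nonneg hs0 hQ
      rw [hcs]
      nlinarith [hcos', hID]
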